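/- Let m ≥ 1 and k ≥ 1 be integers, let v : Finset (Fin m) → ℝ be any set function, and regard G_k^v as a polynomial function of x : Fin m → ℝ. Then for every x : Fin m → ℝ and every j : Fin m, the partial derivative of G_k^v with respect to the coordinate x_j at x equals ∑_{S : Finset (Fin m)} Pr_{k−1}(x)(S) · (v(S ∪ {j}) − v(S)), where Pr_{k−1}(x)(S) = ∑ over f : Fin (k−1) → Option (Fin m) with proj(f) = S of ∏_{s} w_x(f s) is the (k−1)-draw lottery probability with the same per-draw weights w_x. -/

import Mathlib

open Finset

/-- Per-draw weights: project `j` is drawn with probability `x j / k`, and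
`none` (no project) with the remaining probability `1 - (∑ j, x j)/k`. -/
noncomputable def lotW {m : ℕ} (k : ℕ) (x : Fin m → ℝ) : Option (Fin m) → ℝ
  | some j => x j / k
  | none => 1 - (∑ j, x j) / k

/-- Probability of a particular draw function `f : Fin t → Option (Fin m)`,
with per-draw weights determined by `k` and `x`. -/
noncomputable def lotP {m : ℕ} (k t : ℕ) (x : Fin m → ℝ)
    (f : Fin t → Option (Fin m)) : ℝ :=
  ∏ s, lotW k x (f s)

/-- The set of projects chosen by a draw function `f`. -/
def lotProj {m t : ℕ} (f : Fin t → Option (Fin m)) : Finset (Fin m) :=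
  Finset.univ.filter (fun j => ∃ s, f s = some j)


/-- Expected value of the set function `v` under the `k`-bounded-lottery
rounding scheme `r_k` applied to `x`. -/
noncomputable def lotG {m : ℕ} (k : ℕ) (v : Finset (Fin m) → ℝ)
    (x : Fin m → ℝ) : ℝ :=
  ∑ f : Fin k → Option (Fin m), lotP k k x f * v (lotProj f)

/-- Partial derivative of `F : (Fin m → ℝ) → ℝ` with respect to coordinate `j`,
taken via `deriv` along coordinate updates. -/
noncomputable def pd {m : ℕ} (j : Fin m) (F : (Fin m → ℝ) → ℝ)
    (x : Fin m → ℝ) : ℝ :=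
  deriv (fun t => F (Function.update x j t)) (x j)

lemma lotProj_insertNth {m n : ℕ} (s : Fin (n+1)) (y : Option (Fin m))
    (g : Fin n → Option (Fin m)) :
    lotProj (Fin.insertNth (α := fun _ => Option (Fin m)) s y g)
      = y.elim (lotProj g) (fun a => insert a (lotProj g)) := by
  ext c
  cases y with
  | none =>
    simp only [lotProj, Option.elim, mem_filter, mem_univ, true_and]
    constructor
    · rintro ⟨s', h⟩
      rcases eq_or_ne s' s with rfl | hne
      · simp [Fin.insertNth_apply_same] at h
      · obtain ⟨i, rfl⟩ := Fin.exists_succAbove_eq hne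
        exact ⟨i, by simpa [Fin.insertNth_apply_succAbove] using h⟩
    · rintro ⟨i, h⟩
      exact ⟨s.succAbove i, by simpa [Fin.insertNth_apply_succAbove] using h⟩
  | some a =>
    simp only [lotProj, Option.elim, mem_insert, mem_filter, mem_univ, true_and]
    constructor
    · rintro ⟨s', h⟩
      rcases eq_or_ne s' s with rfl | hne
      · left; rw [Fin.insertNth_apply_same] at h; exact (Option.some_inj.mp h).symm
      · obtain ⟨i, rfl⟩ := Fin.exists_succAbove_eq hne
        exact Or.inr ⟨i, by simpa [Fin.insertNth_apply_succAbove] using h⟩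
    · rintro (rfl | ⟨i, h⟩)
      · exact ⟨s, by rw [Fin.insertNth_apply_same]⟩
      · exact ⟨s.succAbove i, by simpa [Fin.insertNth_apply_succAbove] using h⟩

lemma prod_erase_insertNth {m n : ℕ} (s : Fin (n+1)) (y : Option (Fin m))
    (g : Fin n → Option (Fin m)) (w : Option (Fin m) → ℝ) :
    ∏ s' ∈ Finset.univ.erase s,
        w (Fin.insertNth (α := fun _ => Option (Fin m)) s y g s') = ∏ i, w (g i) := by
  have himg : Finset.univ.erase s = Finset.image s.succAbove Finset.univ := by
    ext i
    simp only [mem_erase, mem_univ, and_true, Finset.mem_image]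
    constructor
    · intro h
      obtain ⟨i0, rfl⟩ := Fin.exists_succAbove_eq h
      exact ⟨i0, trivial, rfl⟩
    · rintro ⟨i0, -, rfl⟩; exact Fin.succAbove_ne s i0
  rw [himg, Finset.prod_image (fun a _ b _ h => Fin.succAbove_right_injective h)]
  refine Finset.prod_congr rfl fun i _ => ?_
  rw [Fin.insertNth_apply_succAbove]

lemma opt_sum_full {m n : ℕ} (j : Fin m) (c : ℝ) (A : (Fin n → Option (Fin m)) → ℝ)
    (V : Finset (Fin m) → ℝ) (P : (Fin n → Option (Fin m)) → Finset (Fin m))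
    (D : Option (Fin m) → ℝ) (hDn : D none = -c)
    (hDs : ∀ i, D (some i) = if i = j then c else 0) :
    (∑ y : Option (Fin m), ∑ g : Fin n → Option (Fin m),
        A g * D y * V (y.elim (P g) (fun a => insert a (P g))))
      = c * ∑ g : Fin n → Option (Fin m), A g * (V (insert j (P g)) - V (P g)) := by
  rw [Fintype.sum_option, Finset.sum_comm, ← Finset.sum_add_distrib, Finset.mul_sum]
  refine Finset.sum_congr rfl fun g _ => ?_
  simp only [Option.elim, hDn, hDs]
  rw [Finset.sum_congr rfl (fun i (_ : i ∈ Finset.univ) => (by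
      rw [mul_ite, mul_zero, ite_mul, zero_mul] :
      A g * (if i = j then c else 0) * V (insert i (P g))
        = if i = j then A g * c * V (insert i (P g)) else 0))]
  rw [Finset.sum_ite_eq' Finset.univ j]
  simp only [Finset.mem_univ, if_true]
  ring

lemma key {m : ℕ} (n : ℕ) (v : Finset (Fin m) → ℝ) (x : Fin m → ℝ) (j : Fin m) :
    pd j (lotG (n+1) v) x
      = ∑ g : Fin n → Option (Fin m),
          lotP (n+1) n x g * (v (insert j (lotProj g)) - v (lotProj g)) := by
  classical
  set k : ℕ := n + 1 with hkdef
  set d : Option (Fin m) → ℝ := fun c => match c with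
    | some i => if i = j then (k:ℝ)⁻¹ else 0
    | none => -(k:ℝ)⁻¹ with hd
  have hw : ∀ c : Option (Fin m),
      HasDerivAt (fun t => lotW k (Function.update x j t) c) (d c) (x j) := by
    intro c
    match c with
    | some i =>
      by_cases h : i = j
      · have he : (fun t : ℝ => lotW k (Function.update x j t) (some i))
            = fun t : ℝ => t / (k:ℝ) := by
          funext t; simp [lotW, Function.update_apply, h]
        rw [he]
        simpa [hd, h, div_eq_mul_inv] using (hasDerivAt_id (x j)).div_const (k:ℝ)
      · have he : (fun t : ℝ => lotW k (Function.update x j t) (some i))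
            = fun _ : ℝ => x i / (k:ℝ) := by
          funext t; simp [lotW, Function.update_apply, h]
        rw [he]
        simpa [hd, h] using hasDerivAt_const (x j) (x i / (k:ℝ))
    | none =>
      have hs : ∀ t : ℝ, (∑ i, Function.update x j t i)
          = t + ∑ i ∈ Finset.univ.erase j, x i := by
        intro t
        rw [Finset.sum_update_of_mem (mem_univ j)]
        simp [Finset.sdiff_singleton_eq_erase]
      have he : (fun t : ℝ => lotW k (Function.update x j t) none)
          = fun t : ℝ => 1 - (t + ∑ i ∈ Finset.univ.erase j, x i) / (k:ℝ) := by
        funext t; simp [lotW, hs t]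
      rw [he]
      have h1 : HasDerivAt (fun t : ℝ => (t + ∑ i ∈ Finset.univ.erase j, x i) / (k:ℝ))
          ((k:ℝ)⁻¹) (x j) := by
        simpa [div_eq_mul_inv] using
          ((hasDerivAt_id (x j)).add_const (∑ i ∈ Finset.univ.erase j, x i)).div_const (k:ℝ)
      simpa [hd] using h1.const_sub 1
  have hprod : ∀ f : Fin k → Option (Fin m),
      HasDerivAt (fun t => lotP k k (Function.update x j t) f * v (lotProj f))
        ((∑ s, (∏ s' ∈ Finset.univ.erase s, lotW k x (f s')) * d (f s)) * v (lotProj f))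
        (x j) := by
    intro f
    have := (HasDerivAt.finset_prod (u := Finset.univ)
      (f := fun s t => lotW k (Function.update x j t) (f s))
      (f' := fun s => d (f s)) (fun s _ => hw (f s))).mul_const (v (lotProj f))
    simpa [lotP, Function.update_eq_self, smul_eq_mul] using this
  have hG : HasDerivAt (fun t => lotG k v (Function.update x j t))
      (∑ f : Fin k → Option (Fin m),
        (∑ s, (∏ s' ∈ Finset.univ.erase s, lotW k x (f s')) * d (f s)) * v (lotProj f))
      (x j) := by
    have := HasDerivAt.fun_sum
      (fun f (_ : f ∈ (Finset.univ : Finset (Fin k → Option (Fin m)))) => hprod f)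
    simpa [lotG] using this
  rw [pd, hG.deriv]
  have swap : ∑ f : Fin k → Option (Fin m),
      (∑ s, (∏ s' ∈ Finset.univ.erase s, lotW k x (f s')) * d (f s)) * v (lotProj f)
      = ∑ s : Fin k, ∑ f : Fin k → Option (Fin m),
          (∏ s' ∈ Finset.univ.erase s, lotW k x (f s')) * d (f s) * v (lotProj f) := by
    rw [Finset.sum_comm]
    exact Finset.sum_congr rfl fun f _ => Finset.sum_mul _ _ _
  rw [swap]
  have step : ∀ s : Fin k,
      (∑ f : Fin k → Option (Fin m),
        (∏ s' ∈ Finset.univ.erase s, lotW k x (f s')) * d (f s) * v (lotProj f))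
      = (k:ℝ)⁻¹ * ∑ g : Fin n → Option (Fin m),
          lotP k n x g * (v (insert j (lotProj g)) - v (lotProj g)) := by
    intro s
    rw [← Equiv.sum_comp (Fin.insertNthEquiv (fun _ => Option (Fin m)) s)]
    rw [Fintype.sum_prod_type]
    have hterm : ∀ (y : Option (Fin m)) (g : Fin n → Option (Fin m)),
        (∏ s' ∈ Finset.univ.erase s,
            lotW k x ((Fin.insertNthEquiv (fun _ => Option (Fin m)) s) (y, g) s'))
          * d ((Fin.insertNthEquiv (fun _ => Option (Fin m)) s) (y, g) s)
          * v (lotProj ((Fin.insertNthEquiv (fun _ => Option (Fin m)) s) (y, g)))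
        = lotP k n x g * d y * v (y.elim (lotProj g) (fun a => insert a (lotProj g))) := by
      intro y g
      have hfg : (Fin.insertNthEquiv (fun _ => Option (Fin m)) s) (y, g)
          = Fin.insertNth (α := fun _ => Option (Fin m)) s y g := rfl
      rw [hfg, prod_erase_insertNth, Fin.insertNth_apply_same, lotProj_insertNth]
      rfl
    rw [Finset.sum_congr rfl fun y _ => Finset.sum_congr rfl fun g _ => hterm y g]
    exact opt_sum_full j ((k:ℝ)⁻¹) (lotP k n x) v lotProj d rfl (fun i => rfl)
  rw [Finset.sum_congr rfl fun s _ => step s]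
  rw [Finset.sum_const, card_univ, Fintype.card_fin, nsmul_eq_mul]
  rw [← mul_assoc, mul_inv_cancel₀ (by positivity : ((k:ℕ):ℝ) ≠ 0), one_mul]

theorem stmt9 (m k : ℕ) (hm : 1 ≤ m) (hk : 1 ≤ k) (v : Finset (Fin m) → ℝ)
    (x : Fin m → ℝ) (j : Fin m) :
    pd j (lotG k v) x
      = ∑ S : Finset (Fin m),
          (∑ f ∈ Finset.univ.filter
              (fun f : Fin (k - 1) → Option (Fin m) => lotProj f = S),
            lotP k (k - 1) x f) * (v (S ∪ {j}) - v S) := by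
  obtain ⟨n, rfl⟩ : ∃ n, k = n + 1 := ⟨k - 1, (Nat.succ_pred_eq_of_pos hk).symm⟩
  show pd j (lotG (n+1) v) x
      = ∑ S : Finset (Fin m),
          (∑ f ∈ Finset.univ.filter
              (fun f : Fin n → Option (Fin m) => lotProj f = S),
            lotP (n+1) n x f) * (v (S ∪ {j}) - v S)
  rw [key n v x j]
  have hS : ∀ S : Finset (Fin m),
      (∑ f ∈ Finset.univ.filter
          (fun f : Fin n → Option (Fin m) => lotProj f = S), lotP (n+1) n x f)
        * (v (S ∪ {j}) - v S)
      = ∑ f ∈ Finset.univ.filter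
          (fun f : Fin n → Option (Fin m) => lotProj f = S),
          lotP (n+1) n x f * (v (insert j (lotProj f)) - v (lotProj f)) := by
    intro S
    rw [Finset.sum_mul]
    refine Finset.sum_congr rfl fun f hf => ?_
    rw [← (Finset.mem_filter.mp hf).2]
    have hu : lotProj f ∪ {j} = insert j (lotProj f) := by ext a; simp [or_comm]
    rw [hu]
  rw [Finset.sum_congr rfl fun S _ => hS S]
  rw [Finset.sum_fiberwise_of_maps_to (fun f _ => mem_univ (lotProj f))]
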